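/- Let b₁,...,bₙ ∈ ℝ^m be an LLL-reduced basis, and let 1 ≤ k ≤ n. Then ‖b₁‖·‖b₂‖⋯‖b_k‖ ≤ 2^{k(n−1)/4} · det L(b₁,...,b_k). -/

import Mathlib

open scoped BigOperators RealInnerProductSpace

/-- The Gram–Schmidt orthogonalization `b₁*, …, bₙ*` of the vectors `b₁, …, bₙ`:
`bᵢ* = bᵢ - ∑_{j<i} μᵢⱼ bⱼ*`. -/
noncomputable def gso {m n : ℕ} (b : Fin n → EuclideanSpace ℝ (Fin m)) :
    Fin n → EuclideanSpace ℝ (Fin m) :=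
  haveI : WellFoundedLT (Fin n) := inferInstance
  InnerProductSpace.gramSchmidt ℝ b

/-- The Gram–Schmidt coefficient `μᵢⱼ = ⟨bᵢ, bⱼ*⟩ / ⟨bⱼ*, bⱼ*⟩`. -/
noncomputable def mu {m n : ℕ} (b : Fin n → EuclideanSpace ℝ (Fin m)) (i j : Fin n) : ℝ :=
  ⟪b i, gso b j⟫ / ⟪gso b j, gso b j⟫

/-- `b₁, …, bₙ` is LLL-reduced: `|μⱼᵢ| ≤ 1/2` for `i < j`, and the exchange condition
`‖bⱼ* + μ_{j,j-1} b_{j-1}*‖² ≥ (3/4) ‖b_{j-1}*‖²` for consecutive indices `i + 1 = j`. -/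
def LLLReduced {m n : ℕ} (b : Fin n → EuclideanSpace ℝ (Fin m)) : Prop :=
  (∀ i j : Fin n, i < j → |mu b j i| ≤ 1 / 2) ∧
  (∀ i j : Fin n, (i : ℕ) + 1 = (j : ℕ) →
    (3 / 4 : ℝ) * ‖gso b i‖ ^ 2 ≤ ‖gso b j + mu b j i • gso b i‖ ^ 2)

/-- Membership in the lattice generated by `b₁, …, bₙ`: an integer linear combination. -/
def inLattice {m n : ℕ} (b : Fin n → EuclideanSpace ℝ (Fin m))
    (x : EuclideanSpace ℝ (Fin m)) : Prop :=
  ∃ c : Fin n → ℤ, x = ∑ i, (c i : ℝ) • b i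

/-- The determinant of the lattice generated by `d₁, …, d_k`:
`√(det DᵀD)`, i.e. the square root of the Gram determinant. -/
noncomputable def latticeDet {m k : ℕ} (d : Fin k → EuclideanSpace ℝ (Fin m)) : ℝ :=
  Real.sqrt (Matrix.det (Matrix.of fun i j => ⟪d i, d j⟫))

/-! ### Auxiliary lemmas -/

lemma gso_orth {m k : ℕ} (d : Fin k → EuclideanSpace ℝ (Fin m)) {i j : Fin k} (h : i ≠ j) :
    (⟪gso d i, gso d j⟫ : ℝ) = 0 := by
  haveI : WellFoundedLT (Fin k) := inferInstance
  exact InnerProductSpace.gramSchmidt_orthogonal ℝ d h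

lemma gso_def' {m k : ℕ} (d : Fin k → EuclideanSpace ℝ (Fin m)) (i : Fin k) :
    d i = gso d i + ∑ j ∈ Finset.Iio i, (mu d i j) • gso d j := by
  haveI : WellFoundedLT (Fin k) := inferInstance
  have h := InnerProductSpace.gramSchmidt_def'' ℝ d i
  convert h using 3
  · rfl
  rename_i j hj
  show mu d i j • gso d j = _
  have : mu d i j = ⟪InnerProductSpace.gramSchmidt ℝ d j, d i⟫ / (‖InnerProductSpace.gramSchmidt ℝ d j‖ : ℝ) ^ 2 := by
    rw [mu]
    show (⟪d i, gso d j⟫ : ℝ) / ⟪gso d j, gso d j⟫ = _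
    rw [real_inner_comm, real_inner_self_eq_norm_sq]
    rfl
  rw [this]
  norm_num
  rfl

/-- The Gram determinant equals the product of the squared Gram–Schmidt norms. -/
lemma gram_det_eq {m k : ℕ} (d : Fin k → EuclideanSpace ℝ (Fin m)) :
    Matrix.det (Matrix.of fun i j => ⟪d i, d j⟫) = ∏ i : Fin k, ‖gso d i‖ ^ 2 := by
  classical
  set g := gso d with hg
  set A : Matrix (Fin k) (Fin k) ℝ :=
    Matrix.of (fun i j => if j = i then 1 else if j < i then ⟪g j, d i⟫ / (‖g j‖^2) else 0) with hA
  have hrep : ∀ i, d i = ∑ j : Fin k, A i j • g j := by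
    intro i
    have h := gso_def' d i
    have hsplit : (Finset.univ : Finset (Fin k)) = Finset.Iio i ∪ Finset.Ici i := by
      ext j; simp [lt_or_ge]
    have hdisj : Disjoint (Finset.Iio i) (Finset.Ici i) := by
      simp [Finset.disjoint_left]
    rw [hsplit, Finset.sum_union hdisj]
    have h1 : ∑ j ∈ Finset.Ici i, A i j • g j = g i := by
      rw [Finset.sum_eq_single_of_mem i (by simp)]
      · simp [hA]
      · intro j hj hne
        have : ¬ j < i := by simp [Finset.mem_Ici] at hj; omega
        simp [hA, hne, this]
    have h2 : ∑ j ∈ Finset.Iio i, A i j • g j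
        = ∑ j ∈ Finset.Iio i, (⟪g j, d i⟫ / (‖g j‖^2)) • g j := by
      refine Finset.sum_congr rfl fun j hj => ?_
      have hji : j < i := Finset.mem_Iio.mp hj
      simp [hA, hji, hji.ne]
    rw [h1, h2, add_comm]
    have h2' : ∑ j ∈ Finset.Iio i, (⟪g j, d i⟫ / (‖g j‖^2)) • g j
        = ∑ j ∈ Finset.Iio i, (mu d i j) • g j := by
      refine Finset.sum_congr rfl fun j hj => ?_
      have : mu d i j = ⟪g j, d i⟫ / (‖g j‖^2) := by
        rw [mu]
        show (⟪d i, gso d j⟫ : ℝ) / ⟪gso d j, gso d j⟫ = _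
        rw [real_inner_comm, real_inner_self_eq_norm_sq]
      rw [this]
    rw [h2']
    exact h
  have hGram : (Matrix.of fun i j => (⟪d i, d j⟫ : ℝ))
      = A * Matrix.diagonal (fun l => ‖g l‖^2) * A.transpose := by
    ext i j
    rw [Matrix.of_apply, hrep i, hrep j, sum_inner]
    have key : ∀ l : Fin k, (⟪A i l • g l, ∑ p : Fin k, A j p • g p⟫ : ℝ)
        = A i l * (‖g l‖^2) * A j l := by
      intro l
      rw [inner_sum, Finset.sum_eq_single l]
      · rw [real_inner_smul_left, real_inner_smul_right, real_inner_self_eq_norm_sq]; ring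
      · intro p _ hpl
        rw [real_inner_smul_left, real_inner_smul_right, gso_orth d (Ne.symm hpl)]
        ring
      · simp
    rw [Finset.sum_congr rfl fun l _ => key l]
    simp only [Matrix.mul_apply, Matrix.transpose_apply, Matrix.diagonal_apply, mul_ite,
      mul_zero, ite_mul, zero_mul, Finset.sum_ite_eq', Finset.mem_univ, if_true]
  rw [hGram, Matrix.det_mul, Matrix.det_mul, Matrix.det_transpose, Matrix.det_diagonal]
  have hdetA : A.det = 1 := by
    rw [Matrix.det_of_lowerTriangular A (by
      intro i j hij
      have h2 : i < j := hij
      simp [hA, h2.ne', not_lt_of_gt h2])]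
    simp [hA]
  rw [hdetA]; ring

/-- Gram–Schmidt commutes with restriction to an initial segment. -/
lemma gso_castLE {m n k : ℕ} (hkn : k ≤ n) (b : Fin n → EuclideanSpace ℝ (Fin m)) :
    ∀ i : Fin k, gso (fun j : Fin k => b (Fin.castLE hkn j)) i = gso b (Fin.castLE hkn i) := by
  haveI : WellFoundedLT (Fin k) := inferInstance
  haveI : WellFoundedLT (Fin n) := inferInstance
  intro i
  induction i using WellFoundedLT.induction with
  | _ i ih =>
    show InnerProductSpace.gramSchmidt ℝ _ i = InnerProductSpace.gramSchmidt ℝ b _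
    rw [InnerProductSpace.gramSchmidt_def, InnerProductSpace.gramSchmidt_def]
    congr 1
    refine Finset.sum_bij' (fun (j : Fin k) (_ : j ∈ Finset.Iio i) => Fin.castLE hkn j)
      (fun (j : Fin n) (hj : j ∈ Finset.Iio (Fin.castLE hkn i)) =>
        (⟨(j : ℕ), by have h1 := Finset.mem_Iio.mp hj; rw [Fin.lt_def] at h1; simp at h1; omega⟩ : Fin k))
      ?_ ?_ ?_ ?_ ?_
    · intro a ha
      simpa using Finset.mem_Iio.mp ha
    · intro a ha
      simp only [Finset.mem_Iio] at ha ⊢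
      exact ha
    · intro a _; ext; simp
    · intro a _; ext; simp
    · intro a ha
      have ih' := ih a (Finset.mem_Iio.mp ha)
      simp only [gso] at ih'
      rw [ih']

lemma mu_sq_le {m n : ℕ} {b : Fin n → EuclideanSpace ℝ (Fin m)} (hred : LLLReduced b)
    {i j : Fin n} (h : i < j) : (mu b j i) ^ 2 ≤ 1 / 4 := by
  have h1 := hred.1 i j h
  have h2 := abs_nonneg (mu b j i)
  nlinarith [sq_abs (mu b j i)]

lemma gso_step {m n : ℕ} {b : Fin n → EuclideanSpace ℝ (Fin m)} (hred : LLLReduced b)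
    (i j : Fin n) (hij : (i : ℕ) + 1 = (j : ℕ)) :
    ‖gso b i‖ ^ 2 ≤ 2 * ‖gso b j‖ ^ 2 := by
  have hlt : i < j := by rw [Fin.lt_def]; omega
  have h2 := hred.2 i j hij
  have hexp : ‖gso b j + mu b j i • gso b i‖ ^ 2
      = ‖gso b j‖ ^ 2 + (mu b j i) ^ 2 * ‖gso b i‖ ^ 2 := by
    rw [norm_add_sq_real, real_inner_smul_right, gso_orth b hlt.ne', norm_smul]
    simp [mul_pow, sq_abs]
  have hmu := mu_sq_le hred hlt
  have hg : (0:ℝ) ≤ ‖gso b i‖ ^ 2 := sq_nonneg _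
  nlinarith

lemma gso_chain {m n : ℕ} {b : Fin n → EuclideanSpace ℝ (Fin m)} (hred : LLLReduced b) :
    ∀ (d : ℕ) (j i : Fin n), (j : ℕ) + d = (i : ℕ) →
      ‖gso b j‖ ^ 2 ≤ 2 ^ d * ‖gso b i‖ ^ 2 := by
  intro d
  induction d with
  | zero =>
    intro j i hji
    have : j = i := Fin.ext (by omega)
    simp [this]
  | succ d ihd =>
    intro j i hji
    have hj1 : (j : ℕ) + 1 < n := by have := i.isLt; omega
    set j' : Fin n := ⟨(j : ℕ) + 1, hj1⟩ with hj'
    have h1 : ‖gso b j‖ ^ 2 ≤ 2 * ‖gso b j'‖ ^ 2 := gso_step hred j j' rfl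
    have h2 : ‖gso b j'‖ ^ 2 ≤ 2 ^ d * ‖gso b i‖ ^ 2 := ihd j' i (by simp [hj']; omega)
    have hgi : (0:ℝ) ≤ ‖gso b i‖ ^ 2 := sq_nonneg _
    calc ‖gso b j‖ ^ 2 ≤ 2 * ‖gso b j'‖ ^ 2 := h1
      _ ≤ 2 * (2 ^ d * ‖gso b i‖ ^ 2) := by linarith
      _ = 2 ^ (d + 1) * ‖gso b i‖ ^ 2 := by ring

lemma norm_b_sq_le {m n : ℕ} {b : Fin n → EuclideanSpace ℝ (Fin m)} (hred : LLLReduced b)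
    (i : Fin n) : ‖b i‖ ^ 2 ≤ 2 ^ (i : ℕ) * ‖gso b i‖ ^ 2 := by
  classical
  set g := gso b with hg
  have hrep := gso_def' b i
  set v : EuclideanSpace ℝ (Fin m) := ∑ j ∈ Finset.Iio i, (mu b i j) • g j with hv
  have hiv : (⟪g i, v⟫ : ℝ) = 0 := by
    rw [hv, inner_sum]
    refine Finset.sum_eq_zero fun j hj => ?_
    have : i ≠ j := (Finset.mem_Iio.mp hj).ne'
    rw [real_inner_smul_right, gso_orth b this, mul_zero]
  have hvsq : ‖v‖ ^ 2 = ∑ j ∈ Finset.Iio i, (mu b i j) ^ 2 * ‖g j‖ ^ 2 := by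
    rw [← real_inner_self_eq_norm_sq, hv, sum_inner]
    refine Finset.sum_congr rfl fun j hj => ?_
    rw [inner_sum, Finset.sum_eq_single_of_mem j hj]
    · rw [real_inner_smul_left, real_inner_smul_right, real_inner_self_eq_norm_sq]; ring
    · intro p hp hpj
      rw [real_inner_smul_left, real_inner_smul_right, gso_orth b (Ne.symm hpj),
        mul_zero, mul_zero]
  have hpyth : ‖b i‖ ^ 2 = ‖g i‖ ^ 2 + ∑ j ∈ Finset.Iio i, (mu b i j) ^ 2 * ‖g j‖ ^ 2 := by
    rw [← hvsq]
    rw [show b i = g i + v from hrep, norm_add_sq_real, hiv]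
    ring
  have hterm : ∀ j ∈ Finset.Iio i, (mu b i j) ^ 2 * ‖g j‖ ^ 2
      ≤ (1/4) * (2 ^ ((i:ℕ) - (j:ℕ)) * ‖g i‖ ^ 2) := by
    intro j hj
    have hji : j < i := Finset.mem_Iio.mp hj
    have h1 := mu_sq_le hred hji
    have h2 : ‖g j‖ ^ 2 ≤ 2 ^ ((i:ℕ) - (j:ℕ)) * ‖g i‖ ^ 2 := by
      refine gso_chain hred _ j i ?_
      rw [Fin.lt_def] at hji; omega
    have h3 : (0:ℝ) ≤ ‖g j‖ ^ 2 := sq_nonneg _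
    nlinarith [sq_nonneg (mu b i j)]
  have hsum1 : ∑ j ∈ Finset.Iio i, (mu b i j) ^ 2 * ‖g j‖ ^ 2
      ≤ ∑ j ∈ Finset.Iio i, (1/4) * ((2:ℝ) ^ ((i:ℕ) - (j:ℕ)) * ‖g i‖ ^ 2) :=
    Finset.sum_le_sum hterm
  have hconv : ∑ j ∈ Finset.Iio i, (1/4) * ((2:ℝ) ^ ((i:ℕ) - (j:ℕ)) * ‖g i‖ ^ 2)
      = ∑ t ∈ Finset.range (i:ℕ), (1/4) * ((2:ℝ) ^ ((i:ℕ) - t) * ‖g i‖ ^ 2) := by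
    refine Finset.sum_bij' (fun (j : Fin n) (_ : j ∈ Finset.Iio i) => (j : ℕ))
      (fun (t : ℕ) (ht : t ∈ Finset.range (i:ℕ)) =>
        (⟨t, by have := Finset.mem_range.mp ht; have := i.isLt; omega⟩ : Fin n))
      ?_ ?_ ?_ ?_ ?_
    · intro a ha; simp only [Finset.mem_range]; exact Fin.lt_def.mp (Finset.mem_Iio.mp ha)
    · intro t ht; simp only [Finset.mem_Iio, Fin.lt_def]; exact Finset.mem_range.mp ht
    · intro a _; ext; simp
    · intro t _; simp
    · intro a _; rfl
  have hgeom : ∑ t ∈ Finset.range (i:ℕ), (2:ℝ) ^ ((i:ℕ) - t) = 2 * (2 ^ (i:ℕ) - 1) := by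
    have h1 : ∑ t ∈ Finset.range (i:ℕ), (2:ℝ) ^ ((i:ℕ) - t)
        = ∑ t ∈ Finset.range (i:ℕ), (2:ℝ) ^ (t + 1) := by
      rw [← Finset.sum_range_reflect]
      refine Finset.sum_congr rfl fun t ht => ?_
      have := Finset.mem_range.mp ht
      congr 1
      omega
    rw [h1]
    have : ∀ t : ℕ, (2:ℝ) ^ (t+1) = 2 * 2 ^ t := fun t => by ring
    rw [Finset.sum_congr rfl fun t _ => this t, ← Finset.mul_sum,
      geom_sum_eq (by norm_num : (2:ℝ) ≠ 1)]
    norm_num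
  have h2I : (1:ℝ) ≤ 2 ^ (i:ℕ) := one_le_pow₀ (by norm_num)
  have hgi : (0:ℝ) ≤ ‖g i‖ ^ 2 := sq_nonneg _
  calc ‖b i‖ ^ 2 = ‖g i‖ ^ 2 + ∑ j ∈ Finset.Iio i, (mu b i j) ^ 2 * ‖g j‖ ^ 2 := hpyth
    _ ≤ ‖g i‖ ^ 2 + ∑ t ∈ Finset.range (i:ℕ), (1/4) * ((2:ℝ) ^ ((i:ℕ) - t) * ‖g i‖ ^ 2) := by
        rw [← hconv]; linarith
    _ = ‖g i‖ ^ 2 + (1/4) * ((∑ t ∈ Finset.range (i:ℕ), (2:ℝ) ^ ((i:ℕ) - t)) * ‖g i‖ ^ 2) := by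
        rw [Finset.sum_mul, Finset.mul_sum]
    _ = ‖g i‖ ^ 2 + (1/4) * (2 * (2 ^ (i:ℕ) - 1) * ‖g i‖ ^ 2) := by rw [hgeom]
    _ ≤ 2 ^ (i:ℕ) * ‖g i‖ ^ 2 := by nlinarith

lemma norm_b_le {m n : ℕ} {b : Fin n → EuclideanSpace ℝ (Fin m)} (hred : LLLReduced b)
    (i : Fin n) : ‖b i‖ ≤ (2:ℝ) ^ (((i:ℕ):ℝ)/2) * ‖gso b i‖ := by
  have h := norm_b_sq_le hred i
  have hpow : ((2:ℝ) ^ (((i:ℕ):ℝ)/2)) ^ (2:ℕ) = (2:ℝ) ^ (i:ℕ) := by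
    rw [← Real.rpow_natCast ((2:ℝ) ^ (((i:ℕ):ℝ)/2)) 2, ← Real.rpow_mul (by norm_num)]
    rw [show ((i:ℕ):ℝ)/2 * ((2:ℕ):ℝ) = ((i:ℕ):ℝ) by push_cast; ring]
    exact Real.rpow_natCast 2 (i:ℕ)
  have hc0 : (0:ℝ) ≤ (2:ℝ) ^ (((i:ℕ):ℝ)/2) * ‖gso b i‖ := by positivity
  have hsq : ‖b i‖ ^ 2 ≤ ((2:ℝ) ^ (((i:ℕ):ℝ)/2) * ‖gso b i‖) ^ 2 := by
    rw [mul_pow, hpow]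
    exact h
  calc ‖b i‖ = Real.sqrt (‖b i‖ ^ 2) := (Real.sqrt_sq (norm_nonneg _)).symm
    _ ≤ Real.sqrt (((2:ℝ) ^ (((i:ℕ):ℝ)/2) * ‖gso b i‖) ^ 2) := Real.sqrt_le_sqrt hsq
    _ = (2:ℝ) ^ (((i:ℕ):ℝ)/2) * ‖gso b i‖ := Real.sqrt_sq hc0

theorem prod_norm_le_det_prefix {m n k : ℕ} (hk1 : 1 ≤ k) (hkn : k ≤ n)
    (b : Fin n → EuclideanSpace ℝ (Fin m))
    (hb : LinearIndependent ℝ b) (hred : LLLReduced b) :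
    ∏ i : Fin k, ‖b (Fin.castLE hkn i)‖ ≤
      2 ^ ((k : ℝ) * ((n : ℝ) - 1) / 4) *
        latticeDet (fun i : Fin k => b (Fin.castLE hkn i)) := by
  classical
  have hgd := gso_castLE hkn b
  set P : ℝ := ∏ i : Fin k, ‖gso b (Fin.castLE hkn i)‖ with hP
  have hP0 : 0 ≤ P := Finset.prod_nonneg fun i _ => norm_nonneg _
  have hdet : latticeDet (fun i : Fin k => b (Fin.castLE hkn i)) = P := by
    rw [latticeDet, gram_det_eq]
    have : ∏ i : Fin k, ‖gso (fun j : Fin k => b (Fin.castLE hkn j)) i‖ ^ 2 = P ^ 2 := by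
      rw [hP, ← Finset.prod_pow]
      exact Finset.prod_congr rfl fun i _ => by rw [hgd i]
    rw [this, Real.sqrt_sq hP0]
  have hstep : ∏ i : Fin k, ‖b (Fin.castLE hkn i)‖
      ≤ ∏ i : Fin k, ((2:ℝ) ^ ((((Fin.castLE hkn i) : ℕ):ℝ)/2) * ‖gso b (Fin.castLE hkn i)‖) :=
    Finset.prod_le_prod (fun i _ => norm_nonneg _) (fun i _ => norm_b_le hred _)
  rw [Finset.prod_mul_distrib] at hstep
  have hcast : ∀ i : Fin k, (((Fin.castLE hkn i) : ℕ):ℝ) = ((i:ℕ):ℝ) := by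
    intro i; simp
  have hcoef : ∏ i : Fin k, (2:ℝ) ^ ((((Fin.castLE hkn i) : ℕ):ℝ)/2)
      = (2:ℝ) ^ ((k:ℝ) * ((k:ℝ) - 1) / 4) := by
    have h1 : ∏ i : Fin k, (2:ℝ) ^ ((((Fin.castLE hkn i) : ℕ):ℝ)/2)
        = ∏ i : Fin k, (2:ℝ) ^ (((i:ℕ):ℝ)/2) := by
      refine Finset.prod_congr rfl fun i _ => by rw [hcast i]
    rw [h1, ← Real.rpow_sum_of_pos (by norm_num : (0:ℝ) < 2)]
    congr 1
    have hsum : ∑ i : Fin k, ((i:ℕ):ℝ) = (k:ℝ)*((k:ℝ)-1)/2 := by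
      rw [Fin.sum_univ_eq_sum_range (fun t => ((t:ℕ):ℝ)) k]
      have h := Finset.sum_range_id_mul_two k
      have h2 : ((∑ i ∈ Finset.range k, i : ℕ) : ℝ) * 2 = (k:ℝ) * ((k:ℝ) - 1) := by
        rw [← Nat.cast_ofNat, ← Nat.cast_mul, h]
        push_cast [Nat.cast_sub hk1]
        ring
      push_cast at h2 ⊢
      linarith
    rw [← Finset.sum_div, hsum]
    ring
  have hmono : (2:ℝ) ^ ((k:ℝ) * ((k:ℝ) - 1) / 4) ≤ (2:ℝ) ^ ((k:ℝ) * ((n:ℝ) - 1) / 4) := by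
    apply Real.rpow_le_rpow_of_exponent_le (by norm_num)
    have hk0 : (0:ℝ) ≤ (k:ℝ) := Nat.cast_nonneg k
    have hkn' : (k:ℝ) ≤ (n:ℝ) := Nat.cast_le.mpr hkn
    nlinarith
  calc ∏ i : Fin k, ‖b (Fin.castLE hkn i)‖
      ≤ (∏ i : Fin k, (2:ℝ) ^ ((((Fin.castLE hkn i) : ℕ):ℝ)/2)) * P := hstep
    _ = (2:ℝ) ^ ((k:ℝ) * ((k:ℝ) - 1) / 4) * P := by rw [hcoef]
    _ ≤ (2:ℝ) ^ ((k:ℝ) * ((n:ℝ) - 1) / 4) * P := by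
        exact mul_le_mul_of_nonneg_right hmono hP0
    _ = 2 ^ ((k : ℝ) * ((n : ℝ) - 1) / 4) *
        latticeDet (fun i : Fin k => b (Fin.castLE hkn i)) := by rw [hdet]
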